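/- Let f_P be a strictly positive probability mass function on ℤ with finite entropy and finite second moment. With f_{P'}^γ[n] = (1−2γ)f_P[n] + γ(f_P[n−1]+f_P[n+1]), one has lim_{γ→0⁺} (H(f_{P'}^γ) − H(f_P))/(E(f_{P'}^γ) − E(f_P)) = (m/h²)·[D(f_P(·+1) ‖ f_P) + D(f_P(·−1) ‖ f_P)], where E(f) = (1/2m)Σ_n (nh)² f[n] and D is the discrete KL divergence. -/

import Mathlib

open Filter Topology

/-- Shannon entropy (in nats) of a probability mass function on `ℤ`. -/
noncomputable def discEntropy (f : ℤ → ℝ) : ℝ := -∑' n : ℤ, f n * Real.log (f n)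

/-- Kinetic energy of a PMF on `ℤ` for momentum spacing `h` and mass `m`. -/
noncomputable def discEnergy (m h : ℝ) (f : ℤ → ℝ) : ℝ :=
  (1 / (2 * m)) * ∑' n : ℤ, ((n : ℝ) * h) ^ 2 * f n

/-- Discrete Kullback–Leibler divergence on `ℤ`. -/
noncomputable def discKL (g f : ℤ → ℝ) : ℝ := ∑' n : ℤ, g n * Real.log (g n / f n)

/-- Nearest-neighbor smoothing of a PMF on `ℤ` with parameter `γ`. -/
noncomputable def smoothPMF (f : ℤ → ℝ) (γ : ℝ) (n : ℤ) : ℝ :=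
  (1 - 2 * γ) * f n + γ * (f (n - 1) + f (n + 1))


private lemma tsum_shift' (F : ℤ → ℝ) (c : ℤ) : ∑' n : ℤ, F (n + c) = ∑' n : ℤ, F n := by
  simpa using (Equiv.addRight c).tsum_eq F

private lemma summable_shift (F : ℤ → ℝ) (c : ℤ) (hF : Summable F) :
    Summable (fun n : ℤ => F (n + c)) := by
  exact ((Equiv.addRight c).summable_iff (f := F)).2 hF


private noncomputable def dd (f : ℤ → ℝ) (n : ℤ) : ℝ := f (n-1) + f (n+1) - 2 * f n

private lemma smooth_eq (f : ℤ → ℝ) (γ : ℝ) (n : ℤ) :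
    smoothPMF f γ n = f n + γ * dd f n := by
  simp only [smoothPMF, dd]; ring

private noncomputable def QQ (f : ℤ → ℝ) (γ : ℝ) (n : ℤ) : ℝ :=
  (smoothPMF f γ n * Real.log (smoothPMF f γ n) - f n * Real.log (f n)) / γ

private noncomputable def BB (f : ℤ → ℝ) (n : ℤ) : ℝ :=
  (f (n-1) + f (n+1) + 2 * f n) * (1 + Real.log 6 + |Real.log (f n)|)

private lemma mvt_step (f : ℤ → ℝ) (hpos : ∀ n, 0 < f n)
    {γ : ℝ} (hγ : γ ∈ Set.Ioo (0:ℝ) (1/4)) (n : ℤ) :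
    ∃ ξ ∈ Set.Ioo (0:ℝ) γ, QQ f γ n = dd f n * (Real.log (f n + ξ * dd f n) + 1) := by
  have hupos : ∀ t ∈ Set.Icc (0:ℝ) γ, 0 < f n + t * dd f n := by
    intro t ht
    have h1 := hpos n; have h2 := hpos (n-1); have h3 := hpos (n+1)
    have he : f n + t * dd f n = (1 - 2*t) * f n + t * (f (n-1) + f (n+1)) := by
      simp only [dd]; ring
    rw [he]
    have ht0 := ht.1
    have ht1 : t < 1/2 := lt_of_le_of_lt ht.2 (by linarith [hγ.2])
    nlinarith
  have hderiv : ∀ t ∈ Set.Icc (0:ℝ) γ,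
      HasDerivAt (fun s => (f n + s * dd f n) * Real.log (f n + s * dd f n))
        ((Real.log (f n + t * dd f n) + 1) * dd f n) t := by
    intro t ht
    have h1 : HasDerivAt (fun s : ℝ => f n + s * dd f n) (dd f n) t := by
      simpa using (hasDerivAt_mul_const (dd f n)).const_add (f n)
    exact (Real.hasDerivAt_mul_log (ne_of_gt (hupos t ht))).comp t h1
  obtain ⟨ξ, hξ, hslope⟩ := exists_hasDerivAt_eq_slope
    (fun s => (f n + s * dd f n) * Real.log (f n + s * dd f n))
    (fun t => (Real.log (f n + t * dd f n) + 1) * dd f n) hγ.1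
    (fun t ht => (hderiv t ht).continuousAt.continuousWithinAt)
    (fun t ht => hderiv t ⟨ht.1.le, ht.2.le⟩)
  refine ⟨ξ, hξ, ?_⟩
  have : QQ f γ n = ((f n + γ * dd f n) * Real.log (f n + γ * dd f n)
      - (f n + 0 * dd f n) * Real.log (f n + 0 * dd f n)) / (γ - 0) := by
    simp [QQ, smooth_eq]
  rw [this, ← hslope]; ring

private lemma q_bound (f : ℤ → ℝ) (hpos : ∀ n, 0 < f n) (hle : ∀ n, f n ≤ 1)
    {γ : ℝ} (hγ : γ ∈ Set.Ioo (0:ℝ) (1/4)) (n : ℤ) : |QQ f γ n| ≤ BB f n := by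
  obtain ⟨ξ, hξ, hq⟩ := mvt_step f hpos hγ n
  have h1 := hpos n; have h2 := hpos (n-1); have h3 := hpos (n+1)
  have hl1 := hle n; have hl2 := hle (n-1); have hl3 := hle (n+1)
  have hξ0 := hξ.1
  have hξ4 : ξ < 1/4 := lt_trans hξ.2 hγ.2
  set u := f n + ξ * dd f n with hu
  have hue : u = (1 - 2*ξ) * f n + ξ * (f (n-1) + f (n+1)) := by
    simp only [hu, dd]; ring
  have hupos : 0 < u := by rw [hue]; nlinarith
  have hu_lb : f n / 2 ≤ u := by rw [hue]; nlinarith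
  have hu_ub : u ≤ 3 := by rw [hue]; nlinarith
  have hlog6 : (0:ℝ) ≤ Real.log 6 := Real.log_nonneg (by norm_num)
  have h26 : Real.log 2 ≤ Real.log 6 := Real.log_le_log (by norm_num) (by norm_num)
  have h36 : Real.log 3 ≤ Real.log 6 := Real.log_le_log (by norm_num) (by norm_num)
  have hlogu : |Real.log u| ≤ Real.log 6 + |Real.log (f n)| := by
    have hub : Real.log u ≤ Real.log 3 := Real.log_le_log hupos hu_ub
    have hlb : Real.log (f n) - Real.log 2 ≤ Real.log u := by
      have := Real.log_le_log (by positivity : (0:ℝ) < f n / 2) hu_lb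
      rwa [Real.log_div (ne_of_gt h1) (by norm_num)] at this
    rw [abs_le]
    constructor
    · have := neg_abs_le (Real.log (f n)); linarith
    · have := abs_nonneg (Real.log (f n)); linarith
  have habs_d : |dd f n| ≤ f (n-1) + f (n+1) + 2 * f n := by
    rw [abs_le]; constructor <;> (simp only [dd]; nlinarith)
  rw [hq, abs_mul]
  have hfac : |Real.log u + 1| ≤ 1 + Real.log 6 + |Real.log (f n)| := by
    calc |Real.log u + 1| ≤ |Real.log u| + 1 := by
          simpa using abs_add_le (Real.log u) 1
      _ ≤ 1 + Real.log 6 + |Real.log (f n)| := by linarith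
  calc |dd f n| * |Real.log u + 1|
      ≤ (f (n-1) + f (n+1) + 2 * f n) * (1 + Real.log 6 + |Real.log (f n)|) :=
        mul_le_mul habs_d hfac (abs_nonneg _) (by positivity)
    _ = BB f n := rfl

private lemma q_tendsto (f : ℤ → ℝ) (hpos : ∀ n, 0 < f n) (n : ℤ) :
    Tendsto (fun γ => QQ f γ n) (𝓝[>] (0:ℝ))
      (𝓝 (dd f n * (Real.log (f n) + 1))) := by
  have h1 : HasDerivAt (fun s : ℝ => f n + s * dd f n) (dd f n) 0 := by
    simpa using (hasDerivAt_mul_const (dd f n)).const_add (f n)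
  have hd : HasDerivAt (fun s => (f n + s * dd f n) * Real.log (f n + s * dd f n))
      ((Real.log (f n) + 1) * dd f n) 0 := by
    have hp0 : (0:ℝ) < f n + 0 * dd f n := by simpa using hpos n
    have := (Real.hasDerivAt_mul_log (ne_of_gt hp0)).comp 0 h1
    rw [zero_mul, add_zero] at this; exact this
  have hs := hasDerivAt_iff_tendsto_slope.1 hd
  have hmono : (𝓝[>] (0:ℝ)) ≤ 𝓝[≠] (0:ℝ) :=
    nhdsWithin_mono 0 (fun x hx => ne_of_gt hx)
  have h2 := hs.mono_left hmono
  rw [mul_comm]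
  refine h2.congr fun γ => ?_
  simp only [slope_def_field, QQ, smooth_eq, zero_mul, add_zero, sub_zero]

private lemma summable_sq_shift (f : ℤ → ℝ) (hpos : ∀ n, 0 < f n)
    (hmom : Summable (fun n : ℤ => (n : ℝ) ^ 2 * f n)) (hSf : Summable f) (c : ℤ) :
    Summable (fun n : ℤ => (n : ℝ) ^ 2 * f (n + c)) := by
  have h1 : Summable (fun n : ℤ => ((n + c : ℤ) : ℝ) ^ 2 * f (n + c)) :=
    summable_shift (fun n : ℤ => (n : ℝ) ^ 2 * f n) c hmom
  have h2 : Summable (fun n : ℤ => f (n + c)) := summable_shift f c hSf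
  refine Summable.of_nonneg_of_le (fun n => mul_nonneg (sq_nonneg _) (hpos _).le) ?_
    ((h1.mul_left 2).add (h2.mul_left (2 * (c:ℝ)^2)))
  intro n
  have hb : ((n:ℝ))^2 ≤ 2 * ((n + c : ℤ):ℝ)^2 + 2 * (c:ℝ)^2 := by
    push_cast; nlinarith [sq_nonneg ((n:ℝ) + 2*(c:ℝ))]
  have := mul_le_mul_of_nonneg_right hb (hpos (n+c)).le
  nlinarith [this]

private lemma sum_sq_dd (f : ℤ → ℝ) (hpos : ∀ n, 0 < f n) (hsum : ∑' n : ℤ, f n = 1)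
    (hSf : Summable f) (hmom : Summable (fun n : ℤ => (n : ℝ) ^ 2 * f n)) :
    ∑' n : ℤ, (n : ℝ) ^ 2 * dd f n = 2 := by
  have hs1 : Summable (fun n : ℤ => (n : ℝ) ^ 2 * f (n - 1)) := by
    simpa [← sub_eq_add_neg] using summable_sq_shift f hpos hmom hSf (-1)
  have hs2 : Summable (fun n : ℤ => (n : ℝ) ^ 2 * f (n + 1)) :=
    summable_sq_shift f hpos hmom hSf 1
  have hA1 : Summable (fun n : ℤ => ((n : ℝ) + 1) ^ 2 * f n) := by
    refine Summable.of_nonneg_of_le (fun n => mul_nonneg (sq_nonneg _) (hpos _).le) ?_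
      ((hmom.mul_left 2).add (hSf.mul_left 2))
    intro n
    have hb : ((n:ℝ) + 1)^2 ≤ 2 * (n:ℝ)^2 + 2 := by nlinarith [sq_nonneg ((n:ℝ) - 1)]
    nlinarith [mul_le_mul_of_nonneg_right hb (hpos n).le]
  have hA2 : Summable (fun n : ℤ => ((n : ℝ) - 1) ^ 2 * f n) := by
    refine Summable.of_nonneg_of_le (fun n => mul_nonneg (sq_nonneg _) (hpos _).le) ?_
      ((hmom.mul_left 2).add (hSf.mul_left 2))
    intro n
    have hb : ((n:ℝ) - 1)^2 ≤ 2 * (n:ℝ)^2 + 2 := by nlinarith [sq_nonneg ((n:ℝ) + 1)]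
    nlinarith [mul_le_mul_of_nonneg_right hb (hpos n).le]
  have e1 : ∑' n : ℤ, (n : ℝ) ^ 2 * f (n - 1) = ∑' n : ℤ, ((n : ℝ) + 1) ^ 2 * f n := by
    rw [← tsum_shift' (fun n : ℤ => (n : ℝ) ^ 2 * f (n - 1)) 1]
    apply tsum_congr; intro n
    push_cast [add_sub_cancel_right]; ring_nf
  have e2 : ∑' n : ℤ, (n : ℝ) ^ 2 * f (n + 1) = ∑' n : ℤ, ((n : ℝ) - 1) ^ 2 * f n := by
    rw [← tsum_shift' (fun n : ℤ => (n : ℝ) ^ 2 * f (n + 1)) (-1)]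
    apply tsum_congr; intro n
    push_cast [neg_add_cancel_right]; ring_nf
  have step1 : ∑' n : ℤ, (n : ℝ) ^ 2 * dd f n
      = (∑' n : ℤ, (n : ℝ) ^ 2 * f (n - 1)) + (∑' n : ℤ, (n : ℝ) ^ 2 * f (n + 1))
        - 2 * ∑' n : ℤ, (n : ℝ) ^ 2 * f n := by
    rw [← tsum_mul_left, ← Summable.tsum_add hs1 hs2,
      ← Summable.tsum_sub (hs1.add hs2) (hmom.mul_left 2)]
    apply tsum_congr; intro n; simp only [dd]; ring
  have step2 : (∑' n : ℤ, ((n : ℝ) + 1) ^ 2 * f n) + (∑' n : ℤ, ((n : ℝ) - 1) ^ 2 * f n)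
      - 2 * ∑' n : ℤ, (n : ℝ) ^ 2 * f n = ∑' n : ℤ, 2 * f n := by
    rw [← tsum_mul_left, ← Summable.tsum_add hA1 hA2,
      ← Summable.tsum_sub (hA1.add hA2) (hmom.mul_left 2)]
    apply tsum_congr; intro n; ring
  rw [step1, e1, e2, step2, tsum_mul_left, hsum]
  norm_num


private lemma energy_diff (f : ℤ → ℝ) (m h : ℝ) (hm : 0 < m)
    (hpos : ∀ n, 0 < f n) (hsum : ∑' n : ℤ, f n = 1) (hSf : Summable f)
    (hmom : Summable (fun n : ℤ => (n : ℝ) ^ 2 * f n)) (γ : ℝ) :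
    discEnergy m h (smoothPMF f γ) - discEnergy m h f = γ * h ^ 2 / m := by
  have hs1 : Summable (fun n : ℤ => (n : ℝ) ^ 2 * f (n - 1)) := by
    simpa [← sub_eq_add_neg] using summable_sq_shift f hpos hmom hSf (-1)
  have hs2 : Summable (fun n : ℤ => (n : ℝ) ^ 2 * f (n + 1)) :=
    summable_sq_shift f hpos hmom hSf 1
  have hsd : Summable (fun n : ℤ => (n : ℝ) ^ 2 * dd f n) := by
    have := (hs1.add hs2).sub (hmom.mul_left 2)
    refine this.congr fun n => ?_
    simp only [dd]; ring
  have hE0 : Summable (fun n : ℤ => ((n : ℝ) * h) ^ 2 * f n) := by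
    refine (hmom.mul_left (h^2)).congr fun n => ?_; ring
  have hEg : ∑' n : ℤ, ((n : ℝ) * h) ^ 2 * smoothPMF f γ n
      = (∑' n : ℤ, ((n : ℝ) * h) ^ 2 * f n) + γ * h ^ 2 * 2 := by
    have hrep : ∀ n : ℤ, ((n : ℝ) * h) ^ 2 * smoothPMF f γ n
        = ((n : ℝ) * h) ^ 2 * f n + (γ * h ^ 2) * ((n : ℝ) ^ 2 * dd f n) := by
      intro n; rw [smooth_eq]; ring
    rw [tsum_congr hrep, Summable.tsum_add hE0 (hsd.mul_left (γ * h ^ 2)), tsum_mul_left,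
      sum_sq_dd f hpos hsum hSf hmom]
  simp only [discEnergy]
  rw [hEg]
  ring


section logsum
variable (f : ℤ → ℝ) (hpos : ∀ n, 0 < f n)
  (hH : Summable (fun n : ℤ => f n * Real.log (f n)))
  (hKLp : Summable (fun n : ℤ => f (n + 1) * Real.log (f (n + 1) / f n)))
  (hKLm : Summable (fun n : ℤ => f (n - 1) * Real.log (f (n - 1) / f n)))

include hpos hH hKLp in
private lemma sumP2 : Summable (fun n : ℤ => f (n + 1) * Real.log (f n)) := by
  have hHp : Summable (fun n : ℤ => f (n + 1) * Real.log (f (n + 1))) :=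
    summable_shift (fun n => f n * Real.log (f n)) 1 hH
  refine (hHp.sub hKLp).congr fun n => ?_
  rw [Real.log_div (ne_of_gt (hpos (n+1))) (ne_of_gt (hpos n))]
  ring

include hpos hH hKLm in
private lemma sumP1 : Summable (fun n : ℤ => f (n - 1) * Real.log (f n)) := by
  have hHm : Summable (fun n : ℤ => f (n - 1) * Real.log (f (n - 1))) := by
    simpa [← sub_eq_add_neg] using summable_shift (fun n => f n * Real.log (f n)) (-1) hH
  refine (hHm.sub hKLm).congr fun n => ?_
  rw [Real.log_div (ne_of_gt (hpos (n-1))) (ne_of_gt (hpos n))]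
  ring

include hpos hH hKLp hKLm in
private lemma BB_summable (hSf : Summable f) : Summable (BB f) := by
  have h1 : Summable (fun n : ℤ => f (n + 1)) := summable_shift f 1 hSf
  have h2 : Summable (fun n : ℤ => f (n - 1)) := by
    simpa [← sub_eq_add_neg] using summable_shift f (-1) hSf
  have habs : ∀ (u v : ℤ → ℝ), Summable (fun n => u n * Real.log (v n)) →
      (∀ n, 0 < u n) → Summable (fun n => u n * |Real.log (v n)|) := by
    intro u v hs hu
    refine hs.abs.congr fun n => ?_
    rw [abs_mul, abs_of_pos (hu n)]
  have a1 := habs _ _ (sumP2 f hpos hH hKLp) (fun n => hpos (n+1))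
  have a2 := habs _ _ (sumP1 f hpos hH hKLm) (fun n => hpos (n-1))
  have a3 := habs _ _ hH hpos
  have base : Summable (fun n : ℤ =>
      (1 + Real.log 6) * (f (n-1) + f (n+1) + 2 * f n)
      + (f (n-1) * |Real.log (f n)| + f (n+1) * |Real.log (f n)|
          + 2 * (f n * |Real.log (f n)|))) :=
    (((h2.add h1).add (hSf.mul_left 2)).mul_left (1 + Real.log 6)).add
      ((a2.add a1).add (a3.mul_left 2))
  refine base.congr fun n => ?_
  simp only [BB]; ring

include hpos hH hKLp hKLm in
private lemma sum_d_log (hsum : ∑' n : ℤ, f n = 1) (hSf : Summable f) :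
    ∑' n : ℤ, dd f n * (Real.log (f n) + 1)
      = -(discKL (fun n => f (n + 1)) f + discKL (fun n => f (n - 1)) f) := by
  have h1 : Summable (fun n : ℤ => f (n + 1)) := summable_shift f 1 hSf
  have h2 : Summable (fun n : ℤ => f (n - 1)) := by
    simpa [← sub_eq_add_neg] using summable_shift f (-1) hSf
  have hHp : Summable (fun n : ℤ => f (n + 1) * Real.log (f (n + 1))) :=
    summable_shift (fun n => f n * Real.log (f n)) 1 hH
  have hHm : Summable (fun n : ℤ => f (n - 1) * Real.log (f (n - 1))) := by
    simpa [← sub_eq_add_neg] using summable_shift (fun n => f n * Real.log (f n)) (-1) hH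
  have hP2 := sumP2 f hpos hH hKLp
  have hP1 := sumP1 f hpos hH hKLm
  -- values
  have vHp : ∑' n : ℤ, f (n + 1) * Real.log (f (n + 1)) = ∑' n : ℤ, f n * Real.log (f n) :=
    tsum_shift' (fun n => f n * Real.log (f n)) 1
  have vHm : ∑' n : ℤ, f (n - 1) * Real.log (f (n - 1)) = ∑' n : ℤ, f n * Real.log (f n) := by
    rw [← tsum_shift' (fun n : ℤ => f n * Real.log (f n)) (-1)]
    apply tsum_congr; intro n; rw [← sub_eq_add_neg]
  have vf1 : ∑' n : ℤ, f (n + 1) = 1 := by rw [tsum_shift' f 1, hsum]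
  have vf2 : ∑' n : ℤ, f (n - 1) = 1 := by
    rw [← hsum, ← tsum_shift' f (-1)]
    apply tsum_congr; intro n; rw [← sub_eq_add_neg]
  -- d sums to zero
  have vd : ∑' n : ℤ, dd f n = 0 := by
    have : ∑' n : ℤ, dd f n = (∑' n : ℤ, f (n - 1)) + (∑' n : ℤ, f (n + 1))
        - 2 * ∑' n : ℤ, f n := by
      rw [← tsum_mul_left, ← Summable.tsum_add h2 h1, ← Summable.tsum_sub (h2.add h1) (hSf.mul_left 2)]
      apply tsum_congr; intro n; simp [dd]
    rw [this, vf1, vf2, hsum]; ring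
  -- d * log f
  have hdl : Summable (fun n : ℤ => dd f n * Real.log (f n)) := by
    refine ((hP1.add hP2).sub (hH.mul_left 2)).congr fun n => ?_
    simp only [dd]; ring
  have vdl : ∑' n : ℤ, dd f n * Real.log (f n)
      = (∑' n : ℤ, f (n - 1) * Real.log (f n)) + (∑' n : ℤ, f (n + 1) * Real.log (f n))
        - 2 * ∑' n : ℤ, f n * Real.log (f n) := by
    rw [← tsum_mul_left, ← Summable.tsum_add hP1 hP2, ← Summable.tsum_sub (hP1.add hP2) (hH.mul_left 2)]
    apply tsum_congr; intro n; simp only [dd]; ring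
  -- KL values
  have vKLp : discKL (fun n => f (n + 1)) f
      = (∑' n : ℤ, f n * Real.log (f n)) - ∑' n : ℤ, f (n + 1) * Real.log (f n) := by
    simp only [discKL]
    rw [← vHp, ← Summable.tsum_sub hHp hP2]
    apply tsum_congr; intro n
    rw [Real.log_div (ne_of_gt (hpos (n+1))) (ne_of_gt (hpos n))]; ring
  have vKLm : discKL (fun n => f (n - 1)) f
      = (∑' n : ℤ, f n * Real.log (f n)) - ∑' n : ℤ, f (n - 1) * Real.log (f n) := by
    simp only [discKL]
    rw [← vHm, ← Summable.tsum_sub hHm hP1]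
    apply tsum_congr; intro n
    rw [Real.log_div (ne_of_gt (hpos (n-1))) (ne_of_gt (hpos n))]; ring
  have hsplit : ∑' n : ℤ, dd f n * (Real.log (f n) + 1)
      = (∑' n : ℤ, dd f n * Real.log (f n)) + ∑' n : ℤ, dd f n := by
    have hdd : Summable (dd f) := by
      refine ((h2.add h1).sub (hSf.mul_left 2)).congr fun n => ?_
      simp [dd]
    rw [← Summable.tsum_add hdl hdd]
    apply tsum_congr; intro n; ring
  rw [hsplit, vd, vdl, vKLp, vKLm]; ring

end logsum


private lemma entropy_diff (f : ℤ → ℝ) (hpos : ∀ n, 0 < f n) (hle : ∀ n, f n ≤ 1)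
    (hH : Summable (fun n : ℤ => f n * Real.log (f n))) (hBB : Summable (BB f))
    {γ : ℝ} (hγ : γ ∈ Set.Ioo (0:ℝ) (1/4)) :
    discEntropy (smoothPMF f γ) - discEntropy f = -(γ * ∑' n, QQ f γ n) := by
  have hQs : Summable (QQ f γ) :=
    hBB.of_norm_bounded (fun n => q_bound f hpos hle hγ n)
  have hkey : ∀ n, smoothPMF f γ n * Real.log (smoothPMF f γ n)
      = f n * Real.log (f n) + γ * QQ f γ n := by
    intro n
    simp only [QQ]
    rw [mul_div_cancel₀ _ (ne_of_gt hγ.1)]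
    ring
  simp only [discEntropy]
  rw [tsum_congr hkey, Summable.tsum_add hH (hQs.mul_left γ), tsum_mul_left]
  ring


theorem stmt17 (f : ℤ → ℝ) (m h : ℝ) (hm : 0 < m) (hh : 0 < h)
    (hpos : ∀ n, 0 < f n) (hsum : ∑' n : ℤ, f n = 1)
    (hH : Summable (fun n : ℤ => f n * Real.log (f n)))
    (hmom : Summable (fun n : ℤ => (n : ℝ) ^ 2 * f n))
    (hKLp : Summable (fun n : ℤ => f (n + 1) * Real.log (f (n + 1) / f n)))
    (hKLm : Summable (fun n : ℤ => f (n - 1) * Real.log (f (n - 1) / f n))) :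
    Tendsto
      (fun γ : ℝ =>
        (discEntropy (smoothPMF f γ) - discEntropy f) /
          (discEnergy m h (smoothPMF f γ) - discEnergy m h f))
      (𝓝[>] 0)
      (𝓝 ((m / h ^ 2) *
        (discKL (fun n => f (n + 1)) f + discKL (fun n => f (n - 1)) f))) := by

  have hSf : Summable f := by
    by_contra hc
    rw [tsum_eq_zero_of_not_summable hc] at hsum
    norm_num at hsum
  have hle : ∀ n, f n ≤ 1 := fun n =>
    hsum ▸ Summable.le_tsum hSf n (fun i _ => (hpos i).le)
  have hBB : Summable (BB f) := BB_summable f hpos hH hKLp hKLm hSf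
  have hmem : Set.Ioo (0:ℝ) (1/4) ∈ 𝓝[>] (0:ℝ) :=
    Ioo_mem_nhdsGT_of_mem ⟨le_refl 0, by norm_num⟩
  -- dominated convergence
  have hDC : Tendsto (fun γ => ∑' n, QQ f γ n) (𝓝[>] (0:ℝ))
      (𝓝 (∑' n, dd f n * (Real.log (f n) + 1))) := by
    refine tendsto_tsum_of_dominated_convergence hBB (fun n => q_tendsto f hpos n) ?_
    filter_upwards [hmem] with γ hγ n
    exact q_bound f hpos hle hγ n
  have hlim : Tendsto (fun γ => -(m / h ^ 2) * ∑' n, QQ f γ n) (𝓝[>] (0:ℝ))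
      (𝓝 ((m / h ^ 2) *
        (discKL (fun n => f (n + 1)) f + discKL (fun n => f (n - 1)) f))) := by
    have := hDC.const_mul (-(m / h ^ 2))
    rwa [sum_d_log f hpos hH hKLp hKLm hsum hSf, neg_mul_neg] at this
  refine hlim.congr' ?_
  filter_upwards [hmem] with γ hγ
  rw [entropy_diff f hpos hle hH hBB hγ, energy_diff f m h hm hpos hsum hSf hmom γ]
  have hγ0 : γ ≠ 0 := ne_of_gt hγ.1
  field_simp
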